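/- Let k be an algebraically closed field of characteristic zero and n ≥ 4. Then the Virasoro algebra Vir over k is a quotient of the Yang–Mills algebra ym(n). Equivalently, there exists a surjective Lie algebra morphism φ from the free Lie algebra over k on generators x_1, …, x_n onto Vir such that φ(r_j) = 0 for all j = 1, …, n. -/

import Mathlib

open FreeLieAlgebra

/-- The Yang–Mills relation `r j = ∑ i [xᵢ,[xᵢ,xⱼ]]` in the free Lie algebra on `n`
generators over `k`. -/
noncomputable def ymRel (k : Type*) [Field k] (n : ℕ) (j : Fin n) :
    FreeLieAlgebra k (Fin n) :=
  ∑ i : Fin n, ⁅of k i, ⁅of k i, of k j⁆⁆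

/-- A Lie algebra `V` over `k` is (a realization of) the Virasoro algebra when it has a
basis `{eₙ}_{n ∈ ℤ} ∪ {c}` (indexed by `Option ℤ`, with `some n ↦ eₙ` and `none ↦ c`) with
brackets `[eₙ, eₘ] = (m − n) e_{m+n} + δ_{m+n,0} (m³ − m)/12 · c` and `[eₙ, c] = 0`. -/
def IsVirasoro (k : Type*) [Field k] (V : Type*) [LieRing V] [LieAlgebra k V]
    (b : Module.Basis (Option ℤ) k V) : Prop :=
  (∀ m n : ℤ, ⁅b (some n), b (some m)⁆ =
      ((m : k) - (n : k)) • b (some (m + n)) +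
      (if m + n = 0 then (((m : k) ^ 3 - (m : k)) / 12) else 0) • b none) ∧
  ∀ n : ℤ, ⁅b (some n), b none⁆ = 0

/-- The generator assignment: `a, I•a, c, I•c, 0, 0, …`. -/
noncomputable def ymVirGen {k : Type*} [Field k] {V : Type*} [LieRing V] [LieAlgebra k V]
    (I : k) (a c : V) : ℕ → V
  | 0 => a
  | 1 => I • a
  | 2 => c
  | 3 => I • c
  | _ => 0

lemma ymVirGen_of_ge {k : Type*} [Field k] {V : Type*} [LieRing V] [LieAlgebra k V]
    (I : k) (a c : V) {m : ℕ} (hm : 4 ≤ m) : ymVirGen I a c m = 0 := by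
  obtain ⟨p, rfl⟩ : ∃ p, m = p + 4 := ⟨m - 4, by omega⟩
  rfl

lemma ymVirGen_sum_cancel {k : Type*} [Field k] {V : Type*} [LieRing V] [LieAlgebra k V]
    (I : k) (hI : I * I = -1) (a c : V) {n : ℕ} (hn : 4 ≤ n) (y : V) :
    ∑ i : Fin n, ⁅ymVirGen I a c i.1, ⁅ymVirGen I a c i.1, y⁆⁆ = 0 := by
  rw [Fin.sum_univ_eq_sum_range (fun m => ⁅ymVirGen I a c m, ⁅ymVirGen I a c m, y⁆⁆)]
  rw [← Finset.sum_subset (Finset.range_subset_range.mpr hn)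
    (fun x _ hx => by rw [ymVirGen_of_ge I a c (by simpa using hx)]; simp)]
  simp only [Finset.sum_range_succ, Finset.sum_range_zero, zero_add]
  show ⁅a, ⁅a, y⁆⁆ + ⁅I • a, ⁅I • a, y⁆⁆ + ⁅c, ⁅c, y⁆⁆ + ⁅I • c, ⁅I • c, y⁆⁆ = 0
  simp only [smul_lie, lie_smul, smul_smul, hI, neg_one_smul]
  abel

/-- For `n ≥ 4`, the Virasoro algebra `Vir` over `k` is a quotient of the Yang–Mills algebra
`ym(n)`: there is a surjective Lie algebra morphism from the free Lie algebra on `n`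
generators onto `Vir` killing all the Yang–Mills relations. -/
theorem virasoro_quotient_of_yangMills (k : Type*) [Field k] [IsAlgClosed k] [CharZero k]
    (n : ℕ) (hn : 4 ≤ n)
    (V : Type*) [LieRing V] [LieAlgebra k V] (b : Module.Basis (Option ℤ) k V)
    (hV : IsVirasoro k V b) :
    ∃ φ : FreeLieAlgebra k (Fin n) →ₗ⁅k⁆ V,
      Function.Surjective φ ∧ ∀ j : Fin n, φ (ymRel k n j) = 0 := by
  obtain ⟨I, hI⟩ := IsAlgClosed.exists_pow_nat_eq (-1 : k) (n := 2) (by norm_num)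
  rw [sq] at hI
  set a : V := b (some 2) with ha
  set c : V := b (some (-3)) with hc
  set φ : FreeLieAlgebra k (Fin n) →ₗ⁅k⁆ V :=
    FreeLieAlgebra.lift k (fun i : Fin n => ymVirGen I a c i.1) with hφ
  refine ⟨φ, ?_, ?_⟩
  · -- surjectivity
    set S : LieSubalgebra k V := φ.range with hS
    have hmem : ∀ i : Fin n, ymVirGen I a c i.1 ∈ S := fun i =>
      ⟨of k i, by simp [hφ, lift_of_apply]⟩
    have haS : a ∈ S := by exact hmem ⟨0, by omega⟩
    have hcS : c ∈ S := by exact hmem ⟨2, by omega⟩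
    -- key step lemma
    have key : ∀ p m mm : ℤ, p = m + mm → p ≠ 0 → m ≠ mm →
        b (some mm) ∈ S → b (some m) ∈ S → b (some p) ∈ S := by
      intro p m mm hp hp0 hmm h1 h2
      have hbr := hV.1 m mm
      rw [← hp, if_neg hp0, zero_smul, add_zero] at hbr
      have hne : (m : k) - (mm : k) ≠ 0 := by
        rw [sub_ne_zero]
        exact_mod_cast hmm
      have : b (some p) = ((m : k) - (mm : k))⁻¹ • ⁅b (some mm), b (some m)⁆ := by
        rw [hbr, smul_smul, inv_mul_cancel₀ hne, one_smul]
      rw [this]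
      exact S.smul_mem _ (S.lie_mem h1 h2)
    have h2S : b (some 2) ∈ S := haS
    have hm3S : b (some (-3)) ∈ S := hcS
    have hm1S : b (some (-1)) ∈ S := key (-1) (-3) 2 (by norm_num) (by norm_num) (by norm_num) h2S hm3S
    have h1S : b (some 1) ∈ S := key 1 (-1) 2 (by norm_num) (by norm_num) (by norm_num) h2S hm1S
    have h3S : b (some 3) ∈ S := key 3 1 2 (by norm_num) (by norm_num) (by norm_num) h2S h1S
    have hm2S : b (some (-2)) ∈ S := key (-2) (-3) 1 (by norm_num) (by norm_num) (by norm_num) h1S hm3S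
    have h0S : b (some 0) ∈ S := by
      have hbr := hV.1 (-1) 1
      norm_num at hbr
      have : b (some 0) = (-2 : k)⁻¹ • ⁅b (some 1), b (some (-1))⁆ := by
        rw [hbr]; module
      rw [this]
      exact S.smul_mem _ (S.lie_mem h1S hm1S)
    have hcc : b none ∈ S := by
      have hbr := hV.1 (-2) 2
      norm_num at hbr
      have : b none = (-2 : k) • (⁅b (some 2), b (some (-2))⁆ + (4 : k) • b (some 0)) := by
        rw [hbr]; module
      rw [this]
      exact S.smul_mem _ (S.add_mem (S.lie_mem h2S hm2S) (S.smul_mem _ h0S))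
    have hpos : ∀ j : ℕ, b (some (j : ℤ)) ∈ S := by
      intro j
      induction j with
      | zero => exact_mod_cast h0S
      | succ m ih =>
        match m, ih with
        | 0, _ => exact_mod_cast h1S
        | 1, _ => exact_mod_cast h2S
        | (m + 2), ih =>
          exact key ((m + 3 : ℕ) : ℤ) ((m + 2 : ℕ) : ℤ) 1 (by push_cast; ring)
            (by push_cast; omega) (by push_cast; omega) h1S ih
    have hneg : ∀ j : ℕ, b (some (-(j : ℤ))) ∈ S := by
      intro j
      induction j with
      | zero => exact_mod_cast h0S
      | succ m ih =>
        match m, ih with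
        | 0, _ => exact_mod_cast hm1S
        | 1, _ => exact_mod_cast hm2S
        | (m + 2), ih =>
          exact key (-((m + 3 : ℕ) : ℤ)) (-((m + 2 : ℕ) : ℤ)) (-1) (by push_cast; ring)
            (by push_cast; omega) (by push_cast; omega) hm1S ih
    have hall : ∀ o : Option ℤ, b o ∈ S := by
      rintro (_ | m)
      · exact hcc
      · cases m with
        | ofNat j => exact_mod_cast hpos j
        | negSucc j =>
          have := hneg (j + 1)
          rw [Int.negSucc_eq]
          exact_mod_cast this
    intro v
    have hv : v ∈ S := by
      have hle : (⊤ : Submodule k V) ≤ S.toSubmodule := by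
        rw [← b.span_eq]
        refine Submodule.span_le.mpr ?_
        rintro _ ⟨o, rfl⟩
        exact hall o
      exact hle Submodule.mem_top
    exact hv
  · intro j
    have : φ (ymRel k n j) =
        ∑ i : Fin n, ⁅ymVirGen I a c i.1, ⁅ymVirGen I a c i.1, ymVirGen I a c j.1⁆⁆ := by
      rw [ymRel, ← LieHom.coe_toLinearMap, map_sum]
      refine Finset.sum_congr rfl fun i _ => ?_
      simp [hφ, lift_of_apply]
    rw [this, ymVirGen_sum_cancel I hI a c hn]
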